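/- Let r ≥ 2 and let H_r be the ideal of ℂ[z₁,…,z_r] generated by the 2×2 minors z_i z_{j+1} − z_j z_{i+1} (for 1 ≤ i < j ≤ r−1) of the 2×(r−1) matrix with rows (z₁,…,z_{r−1}) and (z₂,…,z_r), together with the monomials z_i z_r for 2 ≤ i ≤ r. Then: (a) the radical of H_r is the ideal (z₂,…,z_r); (b) the quotient ring ℂ[z₁,…,z_r]/(H_r + (z₁ − 1)) is isomorphic as a ℂ-algebra to ℂ[t]/(t^r); in particular it is a local ring of ℂ-dimension r. (Thus each fiber of the rank-1 Higgs Grassmannian of a single Jordan block is a curvilinear zero-dimensional scheme of degree r supported at a single point.) -/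

import Mathlib

open MvPolynomial

/-- The variable `z_{k+1}` (0-based index `k`) of `R[z₁,…,z_r]`, or `0` if `k ≥ r`. -/
noncomputable def Zv (R : Type*) [CommRing R] (r k : ℕ) : MvPolynomial (Fin r) R :=
  if h : k < r then X ⟨k, h⟩ else 0

/-- The ideal `H_r`: the `2×2` minors `z_i z_{j+1} − z_j z_{i+1}` (`1 ≤ i < j ≤ r−1`,
here written 0-based) of the matrix with rows `(z₁,…,z_{r−1})`, `(z₂,…,z_r)`,
together with the monomials `z_i z_r` for `2 ≤ i ≤ r`. -/
noncomputable def Hideal (R : Type*) [CommRing R] (r : ℕ) : Ideal (MvPolynomial (Fin r) R) :=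
  Ideal.span ({ p | ∃ a b : ℕ, a < b ∧ b + 1 < r ∧
      p = Zv R r a * Zv R r (b + 1) - Zv R r b * Zv R r (a + 1) } ∪
    { p | ∃ a : ℕ, 1 ≤ a ∧ a < r ∧ p = Zv R r a * Zv R r (r - 1) })

lemma Zv_eq (r k : ℕ) (h : k < r) : Zv ℂ r k = X (⟨k, h⟩ : Fin r) := by
  rw [Zv, dif_pos h]

lemma minor_mem (r : ℕ) {a b : ℕ} (hab : a < b) (hb : b + 1 < r) :
    Zv ℂ r a * Zv ℂ r (b + 1) - Zv ℂ r b * Zv ℂ r (a + 1) ∈ Hideal ℂ r :=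
  Ideal.subset_span (Or.inl ⟨a, b, hab, hb, rfl⟩)

lemma killer_mem (r : ℕ) {a : ℕ} (h1 : 1 ≤ a) (h2 : a < r) :
    Zv ℂ r a * Zv ℂ r (r - 1) ∈ Hideal ℂ r :=
  Ideal.subset_span (Or.inr ⟨a, h1, h2, rfl⟩)

section QuotLemmas

variable {r : ℕ} {I : Ideal (MvPolynomial (Fin r) ℂ)}

lemma q_minor (hHI : Hideal ℂ r ≤ I) {a b : ℕ} (hab : a < b) (hb : b + 1 < r) :
    Ideal.Quotient.mk I (Zv ℂ r b) * Ideal.Quotient.mk I (Zv ℂ r (a + 1)) =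
      Ideal.Quotient.mk I (Zv ℂ r a) * Ideal.Quotient.mk I (Zv ℂ r (b + 1)) := by
  have h := Ideal.Quotient.eq_zero_iff_mem.mpr (hHI (minor_mem r hab hb))
  rw [map_sub, map_mul, map_mul, sub_eq_zero] at h
  exact h.symm

lemma q_killer (hHI : Hideal ℂ r ≤ I) {a : ℕ} (h1 : 1 ≤ a) (h2 : a < r) :
    Ideal.Quotient.mk I (Zv ℂ r a) * Ideal.Quotient.mk I (Zv ℂ r (r - 1)) = 0 := by
  rw [← map_mul]
  exact Ideal.Quotient.eq_zero_iff_mem.mpr (hHI (killer_mem r h1 h2))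

lemma q_spread (hHI : Hideal ℂ r ≤ I) : ∀ i j, i ≤ j → i + j + 1 ≤ r →
    Ideal.Quotient.mk I (Zv ℂ r i) * Ideal.Quotient.mk I (Zv ℂ r j) =
      Ideal.Quotient.mk I (Zv ℂ r 0) * Ideal.Quotient.mk I (Zv ℂ r (i + j)) := by
  intro i
  induction i with
  | zero => intro j _ _; simp
  | succ i ih =>
    intro j hij hsum
    have h1 : i < j := by omega
    have h2 : j + 1 < r := by omega
    rw [mul_comm (Ideal.Quotient.mk I (Zv ℂ r (i + 1))) (Ideal.Quotient.mk I (Zv ℂ r j)),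
      q_minor hHI h1 h2, ih (j + 1) (by omega) (by omega),
      show i + (j + 1) = i + 1 + j by omega]

lemma q_kill_high (hHI : Hideal ℂ r ≤ I) : ∀ d i j, 1 ≤ i → i ≤ j → j < r → r ≤ i + j → r - 1 - j ≤ d →
    Ideal.Quotient.mk I (Zv ℂ r i) * Ideal.Quotient.mk I (Zv ℂ r j) = 0 := by
  intro d
  induction d with
  | zero =>
    intro i j h1 h2 h3 h4 h5
    rw [show j = r - 1 by omega]
    exact q_killer hHI h1 (by omega)
  | succ d ih =>
    intro i j h1 h2 h3 h4 h5
    by_cases hj : j = r - 1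
    · rw [hj]; exact q_killer hHI h1 (by omega)
    · obtain ⟨i', rfl⟩ : ∃ i', i = i' + 1 := ⟨i - 1, by omega⟩
      have h1' : i' < j := by omega
      have h2' : j + 1 < r := by omega
      rw [mul_comm (Ideal.Quotient.mk I (Zv ℂ r (i' + 1))) (Ideal.Quotient.mk I (Zv ℂ r j)),
        q_minor hHI h1' h2']
      exact ih i' (j + 1) (by omega) (by omega) (by omega) (by omega) (by omega)

lemma q_nilpotent (hHI : Hideal ℂ r ≤ I) : ∀ d k, 1 ≤ k → k < r → r - k ≤ d →
    ∃ n, (Ideal.Quotient.mk I (Zv ℂ r k)) ^ n = 0 := by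
  intro d
  induction d with
  | zero => intro k h1 h2 h3; omega
  | succ d ih =>
    intro k h1 h2 h3
    by_cases hk : r ≤ k + k
    · exact ⟨2, by rw [pow_two]; exact q_kill_high hHI (r - 1) k k h1 le_rfl h2 hk (by omega)⟩
    · obtain ⟨n, hn⟩ := ih (k + k) (by omega) (by omega) (by omega)
      refine ⟨2 * n, ?_⟩
      rw [pow_mul, pow_two, q_spread hHI k k le_rfl (by omega), mul_pow, hn, mul_zero]

end QuotLemmas

/-- the algebra map killing all variables except `X 0`, sent to `Polynomial.X`. -/
noncomputable def phi0 (r : ℕ) : MvPolynomial (Fin r) ℂ →ₐ[ℂ] Polynomial ℂ :=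
  aeval (fun i : Fin r => if (i : ℕ) = 0 then Polynomial.X else 0)

lemma sub_psi_mem (r : ℕ) (hr : 0 < r) (p : MvPolynomial (Fin r) ℂ) :
    p - Polynomial.aeval (X (⟨0, hr⟩ : Fin r)) (phi0 r p) ∈
      Ideal.span { p | ∃ k : ℕ, 1 ≤ k ∧ k < r ∧ p = Zv ℂ r k } := by
  induction p using MvPolynomial.induction_on with
  | C a => simp [phi0]
  | add p q hp hq =>
    have h := add_mem hp hq
    rw [map_add, map_add]
    convert h using 1
    ring
  | mul_X p i hp =>
    by_cases hi : (i : ℕ) = 0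
    · have hieq : i = (⟨0, hr⟩ : Fin r) := Fin.ext hi
      subst hieq
      have hφ : phi0 r (X (⟨0, hr⟩ : Fin r)) = Polynomial.X := by simp [phi0]
      rw [map_mul, hφ, map_mul, Polynomial.aeval_X, ← sub_mul]
      exact Ideal.mul_mem_right _ _ hp
    · have hXi : X i ∈ Ideal.span { p | ∃ k : ℕ, 1 ≤ k ∧ k < r ∧ p = Zv ℂ r k } := by
        refine Ideal.subset_span ⟨(i : ℕ), by omega, i.isLt, ?_⟩
        rw [Zv_eq r _ i.isLt]
      have hφ : phi0 r (X i) = 0 := by simp [phi0, hi]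
      rw [map_mul, hφ, mul_zero, map_zero, sub_zero]
      exact Ideal.mul_mem_left _ _ hXi

lemma span_eq_ker (r : ℕ) (hr : 0 < r) :
    Ideal.span { p | ∃ k : ℕ, 1 ≤ k ∧ k < r ∧ p = Zv ℂ r k } = RingHom.ker (phi0 r) := by
  apply le_antisymm
  · rw [Ideal.span_le]
    rintro p ⟨k, hk1, hk2, rfl⟩
    have : phi0 r (Zv ℂ r k) = 0 := by
      rw [Zv_eq r k hk2]
      simp only [phi0, aeval_X]
      rw [if_neg (by simpa using by omega : ¬((⟨k, hk2⟩ : Fin r) : ℕ) = 0)]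
    exact this
  · intro p hp
    have h := sub_psi_mem r hr p
    rw [show phi0 r p = 0 from hp, map_zero, sub_zero] at h
    exact h

set_option maxHeartbeats 2000000 in
theorem stmt2 (r : ℕ) (hr : 2 ≤ r) :
    (Hideal ℂ r).radical = Ideal.span { p | ∃ k : ℕ, 1 ≤ k ∧ k < r ∧ p = Zv ℂ r k } ∧
    Nonempty ((MvPolynomial (Fin r) ℂ ⧸ (Hideal ℂ r + Ideal.span {Zv ℂ r 0 - 1})) ≃ₐ[ℂ]
      (Polynomial ℂ ⧸ Ideal.span {(Polynomial.X : Polynomial ℂ) ^ r})) ∧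
    IsLocalRing (MvPolynomial (Fin r) ℂ ⧸ (Hideal ℂ r + Ideal.span {Zv ℂ r 0 - 1})) ∧
    Module.finrank ℂ (MvPolynomial (Fin r) ℂ ⧸ (Hideal ℂ r + Ideal.span {Zv ℂ r 0 - 1})) = r := by
  -- Part (a)
  have part_a : (Hideal ℂ r).radical =
      Ideal.span { p | ∃ k : ℕ, 1 ≤ k ∧ k < r ∧ p = Zv ℂ r k } := by
    apply le_antisymm
    · have hprime : (Ideal.span { p | ∃ k : ℕ, 1 ≤ k ∧ k < r ∧ p = Zv ℂ r k }).IsPrime := by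
        rw [span_eq_ker r (by omega)]
        exact RingHom.ker_isPrime _
      rw [hprime.radical_le_iff, Hideal, Ideal.span_le]
      rintro p (⟨a, b, hab, hb, rfl⟩ | ⟨a, h1, h2, rfl⟩)
      · exact sub_mem
          (Ideal.mul_mem_left _ _ (Ideal.subset_span ⟨b + 1, by omega, by omega, rfl⟩))
          (Ideal.mul_mem_right _ _ (Ideal.subset_span ⟨b, by omega, by omega, rfl⟩))
      · exact Ideal.mul_mem_left _ _ (Ideal.subset_span ⟨r - 1, by omega, by omega, rfl⟩)
    · rw [Ideal.span_le]
      rintro p ⟨k, h1, h2, rfl⟩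
      obtain ⟨n, hn⟩ := q_nilpotent (le_refl (Hideal ℂ r)) (r - k) k h1 h2 le_rfl
      exact Ideal.mem_radical_iff.mpr
        ⟨n, by rwa [← map_pow, Ideal.Quotient.eq_zero_iff_mem] at hn⟩
  -- Part (b)
  set J := Hideal ℂ r + Ideal.span {Zv ℂ r 0 - 1} with hJdef
  have hHJ : Hideal ℂ r ≤ J := by
    rw [hJdef, Submodule.add_eq_sup]; exact le_sup_left
  have hz0 : Zv ℂ r 0 - 1 ∈ J := by
    rw [hJdef, Submodule.add_eq_sup]
    exact Submodule.mem_sup_right (Ideal.subset_span rfl)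
  set T := Polynomial ℂ ⧸ Ideal.span {(Polynomial.X : Polynomial ℂ) ^ r} with hTdef
  set t : T := Ideal.Quotient.mk _ Polynomial.X with htdef
  have ht : t ^ r = 0 := by
    rw [htdef, ← map_pow, Ideal.Quotient.eq_zero_iff_mem]
    exact Ideal.subset_span rfl
  set φ : MvPolynomial (Fin r) ℂ →ₐ[ℂ] T := aeval (fun i : Fin r => t ^ (i : ℕ)) with hφdef
  have hφZv : ∀ k, k < r → φ (Zv ℂ r k) = t ^ k := by
    intro k h
    rw [Zv_eq r k h, hφdef, aeval_X]
  have hφJ : ∀ p ∈ J, φ p = 0 := by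
    have hker : J ≤ RingHom.ker φ := by
      rw [hJdef, Submodule.add_eq_sup, sup_le_iff]
      constructor
      · rw [Hideal, Ideal.span_le]
        rintro p (⟨a, b, hab, hb, rfl⟩ | ⟨a, h1, h2, rfl⟩)
        · show φ _ = 0
          rw [map_sub, map_mul, map_mul, hφZv a (by omega), hφZv b (by omega),
            hφZv (b + 1) (by omega), hφZv (a + 1) (by omega), ← pow_add, ← pow_add,
            show a + (b + 1) = b + (a + 1) by omega, sub_self]
        · show φ _ = 0
          rw [map_mul, hφZv a (by omega), hφZv (r - 1) (by omega), ← pow_add,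
            show a + (r - 1) = r + (a - 1) by omega, pow_add, ht, zero_mul]
      · rw [Ideal.span_le]
        rintro p rfl
        show φ _ = 0
        rw [map_sub, map_one, hφZv 0 (by omega), pow_zero, sub_self]
    exact fun p hp => hker hp
  set φbar := Ideal.Quotient.liftₐ J φ hφJ with hφbar
  have hφbar_mk : ∀ p, φbar (Ideal.Quotient.mk J p) = φ p := by
    intro p
    rfl
  set x1 : MvPolynomial (Fin r) ℂ ⧸ J := Ideal.Quotient.mk J (Zv ℂ r 1) with hx1def
  have hx0 : Ideal.Quotient.mk J (Zv ℂ r 0) = 1 := by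
    have h := Ideal.Quotient.eq_zero_iff_mem.mpr hz0
    rw [map_sub, map_one, sub_eq_zero] at h
    exact h
  have hxk : ∀ k, k < r → Ideal.Quotient.mk J (Zv ℂ r k) = x1 ^ k := by
    intro k
    induction k with
    | zero => intro _; rw [pow_zero, hx0]
    | succ k ih =>
      intro hk
      rcases Nat.eq_zero_or_pos k with hk0 | hk0
      · subst hk0; rw [pow_one, hx1def]
      · have h := q_minor hHJ (a := 0) (b := k) hk0 hk
        rw [show (0 : ℕ) + 1 = 1 from rfl] at h
        calc Ideal.Quotient.mk J (Zv ℂ r (k + 1))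
            = Ideal.Quotient.mk J (Zv ℂ r 0) * Ideal.Quotient.mk J (Zv ℂ r (k + 1)) := by
              rw [hx0, one_mul]
          _ = Ideal.Quotient.mk J (Zv ℂ r k) * Ideal.Quotient.mk J (Zv ℂ r 1) := h.symm
          _ = x1 ^ k * x1 := by rw [ih (by omega)]
          _ = x1 ^ (k + 1) := by rw [pow_succ]
  have hx1r : x1 ^ r = 0 := by
    have h := q_killer hHJ (a := 1) le_rfl (by omega)
    calc x1 ^ r = x1 * x1 ^ (r - 1) := by
          rw [← pow_succ']; congr 1; omega
      _ = x1 * Ideal.Quotient.mk J (Zv ℂ r (r - 1)) := by rw [hxk (r - 1) (by omega)]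
      _ = 0 := h
  have hψ0 : ∀ p ∈ Ideal.span {(Polynomial.X : Polynomial ℂ) ^ r},
      Polynomial.aeval x1 p = 0 := by
    intro p hp
    obtain ⟨c, rfl⟩ := Ideal.mem_span_singleton.mp hp
    rw [map_mul, map_pow, Polynomial.aeval_X, hx1r, zero_mul]
  set ψbar : T →ₐ[ℂ] (MvPolynomial (Fin r) ℂ ⧸ J) :=
    Ideal.Quotient.liftₐ (Ideal.span {(Polynomial.X : Polynomial ℂ) ^ r}) (Polynomial.aeval x1) hψ0 with hψbar
  have hψbar_mk : ∀ p, ψbar (Ideal.Quotient.mk (Ideal.span {(Polynomial.X : Polynomial ℂ) ^ r}) p) = Polynomial.aeval x1 p := by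
    intro p
    rfl
  have hcomp1 : φbar.comp ψbar = AlgHom.id ℂ T := by
    apply Ideal.Quotient.algHom_ext
    apply Polynomial.algHom_ext
    show φbar (ψbar (Ideal.Quotient.mkₐ ℂ _ Polynomial.X)) = Ideal.Quotient.mkₐ ℂ _ Polynomial.X
    rw [Ideal.Quotient.mkₐ_eq_mk, hψbar_mk, Polynomial.aeval_X, hx1def, hφbar_mk,
      hφZv 1 (by omega), pow_one]
  have hcomp2 : ψbar.comp φbar = AlgHom.id ℂ (MvPolynomial (Fin r) ℂ ⧸ J) := by
    apply Ideal.Quotient.algHom_ext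
    apply MvPolynomial.algHom_ext
    intro i
    show ψbar (φbar (Ideal.Quotient.mkₐ ℂ _ (X i))) = Ideal.Quotient.mkₐ ℂ _ (X i)
    rw [Ideal.Quotient.mkₐ_eq_mk, hφbar_mk, hφdef, aeval_X, map_pow, htdef, hψbar_mk,
      Polynomial.aeval_X, ← hxk (i : ℕ) i.isLt, Zv_eq r _ i.isLt]
  set e : (MvPolynomial (Fin r) ℂ ⧸ J) ≃ₐ[ℂ] T := AlgEquiv.ofAlgHom φbar ψbar hcomp1 hcomp2
    with hedef
  -- ε : T →ₐ[ℂ] ℂ, evaluation at 0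
  have hε0 : ∀ p ∈ Ideal.span {(Polynomial.X : Polynomial ℂ) ^ r},
      Polynomial.aeval (0 : ℂ) p = 0 := by
    intro p hp
    obtain ⟨c, rfl⟩ := Ideal.mem_span_singleton.mp hp
    rw [map_mul, map_pow, Polynomial.aeval_X, zero_pow (by omega), zero_mul]
  set ε : T →ₐ[ℂ] ℂ :=
    Ideal.Quotient.liftₐ (Ideal.span {(Polynomial.X : Polynomial ℂ) ^ r}) (Polynomial.aeval (0 : ℂ)) hε0 with hεdef
  have hε_mk : ∀ p, ε (Ideal.Quotient.mk (Ideal.span {(Polynomial.X : Polynomial ℂ) ^ r}) p) = Polynomial.aeval (0 : ℂ) p := by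
    intro p
    rfl
  have hnil : ∀ a : T, ε a = 0 → IsNilpotent a := by
    intro a ha
    obtain ⟨p, rfl⟩ := Ideal.Quotient.mk_surjective a
    rw [hε_mk] at ha
    have hp0 : p.coeff 0 = 0 := by
      rw [Polynomial.coeff_zero_eq_eval_zero, ← Polynomial.coe_aeval_eq_eval]
      exact ha
    obtain ⟨c, rfl⟩ := Polynomial.X_dvd_iff.mpr hp0
    refine ⟨r, ?_⟩
    rw [← map_pow, mul_pow]
    exact Ideal.Quotient.eq_zero_iff_mem.mpr
      (Ideal.mul_mem_right _ _ (Ideal.subset_span rfl))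
  have hT1 : (1 : T) ≠ 0 := by
    intro h
    have : (1 : ℂ) = 0 := by
      have := congrArg ε h
      rwa [map_one, map_zero] at this
    exact one_ne_zero this
  haveI : Nontrivial T := nontrivial_of_ne 1 0 hT1
  have hunit : ∀ a : T, ε a ≠ 0 → IsUnit a := by
    intro a ha
    have h1 : ε (a - algebraMap ℂ T (ε a)) = 0 := by
      rw [map_sub, AlgHom.commutes]
      simp
    have h2 : IsNilpotent (a - algebraMap ℂ T (ε a)) := hnil _ h1
    have h3 : IsUnit (algebraMap ℂ T (ε a)) :=
      (isUnit_iff_ne_zero.mpr ha).map (algebraMap ℂ T)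
    have h4 := h2.isUnit_add_left_of_commute h3 (Commute.all _ _)
    have : algebraMap ℂ T (ε a) + (a - algebraMap ℂ T (ε a)) = a := by ring
    rwa [this] at h4
  have hTlocal : IsLocalRing T := by
    apply IsLocalRing.of_isUnit_or_isUnit_one_sub_self
    intro a
    by_cases h : ε a = 0
    · right
      apply hunit
      rw [map_sub, map_one, h, sub_zero]
      exact one_ne_zero
    · exact Or.inl (hunit a h)
  have hA1 : (1 : MvPolynomial (Fin r) ℂ ⧸ J) ≠ 0 := by
    intro h
    apply hT1
    have := congrArg e h
    rwa [map_one, map_zero] at this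
  haveI : Nontrivial (MvPolynomial (Fin r) ℂ ⧸ J) := nontrivial_of_ne 1 0 hA1
  have hpull : ∀ a : MvPolynomial (Fin r) ℂ ⧸ J, IsUnit (e a) → IsUnit a := by
    intro a h
    have := h.map e.symm
    rwa [AlgEquiv.symm_apply_apply] at this
  have hAlocal : IsLocalRing (MvPolynomial (Fin r) ℂ ⧸ J) := by
    apply IsLocalRing.of_isUnit_or_isUnit_one_sub_self
    intro a
    by_cases h : ε (e a) = 0
    · right
      apply hpull
      apply hunit
      rw [map_sub, map_one, map_sub, map_one, h, sub_zero]
      exact one_ne_zero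
    · exact Or.inl (hpull a (hunit _ h))
  have hTrank : Module.finrank ℂ T = r := by
    set_option maxHeartbeats 1000000 in
    have hne : (Polynomial.X : Polynomial ℂ) ^ r ≠ 0 := pow_ne_zero _ Polynomial.X_ne_zero
    show Module.finrank ℂ (AdjoinRoot ((Polynomial.X : Polynomial ℂ) ^ r)) = r
    have h1 := (AdjoinRoot.powerBasis hne).finrank
    rw [AdjoinRoot.powerBasis_dim, Polynomial.natDegree_X_pow] at h1
    exact h1
  have hArank : Module.finrank ℂ (MvPolynomial (Fin r) ℂ ⧸ J) = r := by
    rw [e.toLinearEquiv.finrank_eq]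
    exact hTrank
  exact ⟨part_a, ⟨e⟩, hAlocal, hArank⟩
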